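/- Every non-recursive context-free game has the bounded depth property, and consequently has a weakly dominant one-pass strategy (and hence an undominated one-pass strategy). -/

import Mathlib

namespace CFG

/-- Juliet's two kinds of moves. -/
inductive JMove : Type
  | call : JMove
  | read : JMove
deriving DecidableEq

/-- The extended alphabet Σ̂: `Sum.inl a` is the plain symbol `a`,
`Sum.inr a` is the "called" copy `â`. -/
abbrev HSym (A : Type) : Type := A ⊕ A

/-- The homomorphism ♮ deleting called symbols. -/
def flat {A : Type} (α : List (HSym A)) : List A :=
  α.filterMap (fun x => match x with | Sum.inl a => some a | Sum.inr _ => none)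

/-- A context-free game: a (minimal) DFA `T` over `A` with finite state set `Q`,
and a replacement relation `R` with nonempty replacement words and regular
replacement languages. -/
structure CFGame (A : Type) where
  Q : Type
  fintypeQ : Fintype Q
  T : DFA A Q
  minimal_reachable : ∀ q : Q, ∃ w : List A, T.evalFrom T.start w = q
  minimal_distinguishable :
    ∀ q q' : Q, (∀ w : List A, T.evalFrom q w ∈ T.accept ↔ T.evalFrom q' w ∈ T.accept) → q = q'
  R : A → List A → Prop
  R_ne : ∀ a v, R a v → v ≠ []
  R_regular : ∀ a, Language.IsRegular {v : List A | R a v}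

variable {A : Type}

/-- `a` is a function symbol (its replacement language is nonempty). -/
def CFGame.Fn (G : CFGame A) (a : A) : Prop := ∃ v, G.R a v

/-- One-pass strategies of Juliet (values at non-function symbols are irrelevant). -/
abbrev JStrat (A : Type) : Type := List (HSym A) → A → JMove

/-- Strategies of Romeo (values at non-function symbols are irrelevant). -/
abbrev RStrat (A : Type) : Type := List (HSym A) → A → List A

/-- Validity of a Romeo strategy: replacement words belong to the replacement language. -/
def CFGame.RValid (G : CFGame A) (τ : RStrat A) : Prop :=
  ∀ (α : List (HSym A)) (a : A), G.Fn a → G.R a (τ α a)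

/-- Configurations, instrumented for depth bookkeeping: a history string, the
remaining string where every symbol is annotated with its call-nesting level,
and the maximal nesting depth of the `Call` moves played so far. -/
abbrev Config (A : Type) : Type := List (HSym A) × List (A × ℕ) × ℕ

/-- One step of a play: Juliet reads or calls the current symbol according to `σ`
(a call is only possible at a function symbol); a call is answered by `τ`. -/
noncomputable def CFGame.step (G : CFGame A) (σ : JStrat A) (τ : RStrat A) :
    Config A → Config A :=
  fun c =>
    match c with
    | (α, [], d) => (α, [], d)
    | (α, (a, k) :: v, d) =>
      letI := Classical.propDecidable (G.Fn a ∧ σ α a = JMove.call)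
      if G.Fn a ∧ σ α a = JMove.call then
        (α ++ [Sum.inr a], (τ α a).map (fun b => (b, k + 1)) ++ v, max d (k + 1))
      else (α ++ [Sum.inl a], v, d)

/-- The play of `σ` against `τ` on input word `w`, as the sequence of its
configurations (the configuration stays fixed once the remaining string is empty). -/
noncomputable def CFGame.play (G : CFGame A) (σ : JStrat A) (τ : RStrat A)
    (w : List A) (n : ℕ) : Config A :=
  (G.step σ τ)^[n] ([], w.map (fun a => (a, 0)), 0)

/-- `σ` wins on `w`: against every (valid) Romeo strategy, the play on `w` is
finite and its final string belongs to the target language. -/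
def CFGame.WinsOn (G : CFGame A) (σ : JStrat A) (w : List A) : Prop :=
  ∀ τ : RStrat A, G.RValid τ →
    ∃ n : ℕ, (G.play σ τ w n).2.1 = [] ∧
      G.T.evalFrom G.T.start (flat (G.play σ τ w n).1) ∈ G.T.accept

/-- The winning set `W(σ)`. -/
def CFGame.W (G : CFGame A) (σ : JStrat A) : Set (List A) := {w | G.WinsOn σ w}

/-- `σ` is terminating: every play of `σ` is finite. -/
def CFGame.Terminating (G : CFGame A) (σ : JStrat A) : Prop :=
  ∀ τ : RStrat A, G.RValid τ → ∀ w : List A, ∃ n : ℕ, (G.play σ τ w n).2.1 = []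

/-- `σ` is dominant: it dominates every one-pass strategy. -/
def CFGame.Dominant (G : CFGame A) (σ : JStrat A) : Prop :=
  ∀ σ' : JStrat A, G.W σ' ⊆ G.W σ

/-- `σ` is undominated: no one-pass strategy strictly dominates it. -/
def CFGame.Undominated (G : CFGame A) (σ : JStrat A) : Prop :=
  ¬ ∃ σ' : JStrat A, G.W σ ⊂ G.W σ'

/-- `σ` is forgetful: its decisions only depend on `♮α` and the current symbol. -/
def CFGame.Forgetful (G : CFGame A) (σ : JStrat A) : Prop :=
  ∀ (α β : List (HSym A)) (a : A), G.Fn a → flat α = flat β → σ α a = σ β a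

/-- `σ` is regular: the language `{αa : σ(α,a) = Call}` over Σ̂ is regular. -/
def CFGame.RegularStrat (G : CFGame A) (σ : JStrat A) : Prop :=
  Language.IsRegular
    {x : List (HSym A) | ∃ (α : List (HSym A)) (a : A),
      G.Fn a ∧ σ α a = JMove.call ∧ x = α ++ [Sum.inl a]}

/-- One step of a strategy automaton of a strongly regular strategy, on the state
set `Q ∪ {Call}` (`none` is the absorbing state `Call`). -/
def optStep {Q : Type} (δA : Q → A → Option Q) (o : Option Q) (a : A) : Option Q :=
  o.bind (fun q => δA q a)

/-- `σ` is strongly regular: given by an automaton obtained from `T` by rerouting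
some transitions to a new accepting state `Call`; Juliet plays `Call` on `(α,a)`
iff the automaton maps `♮α·a` to `Call`. -/
def CFGame.StronglyRegular (G : CFGame A) (σ : JStrat A) : Prop :=
  ∃ δA : G.Q → A → Option G.Q,
    (∀ q a, δA q a = some (G.T.step q a) ∨ δA q a = none) ∧
    ∀ (α : List (HSym A)) (a : A), G.Fn a →
      (σ α a = JMove.call ↔
        List.foldl (optStep δA) (some G.T.start) (flat α ++ [a]) = none)

/-- Shortlex (strict) order on words. -/
def shortLex [LinearOrder A] (v w : List A) : Prop :=
  v.length < w.length ∨ (v.length = w.length ∧ List.Lex (· < ·) v w)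

/-- `V <_sl W` for sets of words: the shortlex-least word of the symmetric
difference belongs to `W`. -/
def slLT [LinearOrder A] (V W : Set (List A)) : Prop :=
  ∃ w : List A, w ∈ W ∧ w ∉ V ∧ ∀ v : List A, shortLex v w → (v ∈ V ↔ v ∈ W)

/-- `V ≤_sl W` for sets of words. -/
def slLE [LinearOrder A] (V W : Set (List A)) : Prop := V = W ∨ slLT V W

/-- `σ` is weakly dominant: `W(σ') ≤_sl W(σ)` for every one-pass strategy `σ'`. -/
def CFGame.WeaklyDominant [LinearOrder A] (G : CFGame A) (σ : JStrat A) : Prop :=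
  ∀ σ' : JStrat A, slLE (G.W σ') (G.W σ)

/-- The bounded depth property. -/
def CFGame.BoundedDepthProperty (G : CFGame A) : Prop :=
  ∃ B : ℕ → ℕ, ∀ σ : JStrat A, ∀ k : ℕ, ∃ σk : JStrat A,
    ∀ w ∈ G.W σ, w.length ≤ k →
      G.WinsOn σk w ∧
      ∀ τ : RStrat A, G.RValid τ → ∀ n : ℕ, (G.play σk τ w n).2.2 ≤ B w.length

/-- Prefix-freeness of all replacement languages. -/
def CFGame.PrefixFree (G : CFGame A) : Prop :=
  ∀ (a : A) (u v : List A), G.R a u → G.R a v → u <+: v → u = v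

/-- Non-recursiveness: no function symbol can be derived from itself. -/
def CFGame.NonRecursive (G : CFGame A) : Prop :=
  ¬ ∃ (n : ℕ) (f : ℕ → A), 1 ≤ n ∧ f 0 = f n ∧ (∀ i ≤ n, G.Fn (f i)) ∧
    ∀ k < n, ∃ v : List A, G.R (f k) v ∧ f (k + 1) ∈ v

/-- `σ` is almost undominated: only finitely many words are lost by `σ` but won
by some strategy dominating `σ`. -/
def CFGame.AlmostUndominated (G : CFGame A) (σ : JStrat A) : Prop :=
  Set.Finite {w : List A | ¬ G.WinsOn σ w ∧
    ∃ σ' : JStrat A, G.W σ ⊆ G.W σ' ∧ G.WinsOn σ' w}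

/-- Convergence of a sequence of one-pass strategies. -/
def Converges (G : CFGame A) (σs : ℕ → JStrat A) (σ : JStrat A) : Prop :=
  ∀ n : ℕ, ∃ k0 : ℕ, ∀ k ≥ k0, ∀ α : List (HSym A), α.length ≤ n →
    ∀ a : A, G.Fn a → σ α a = σs k α a

/-- The one-pass strategy defined by a DFA `M` over Σ̂ (a strategy automaton):
play `Call` on `(α,a)` iff `M` accepts `α·a`. -/
noncomputable def autoStrat {S : Type} (M : DFA (HSym A) S) : JStrat A :=
  fun α a =>
    letI := Classical.propDecidable (M.eval (α ++ [Sum.inl a]) ∈ M.accept)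
    if M.eval (α ++ [Sum.inl a]) ∈ M.accept then JMove.call else JMove.read

/-- `States(q; w, σ)`: the `T`-states `δ*(q, ♮α)` over final history strings `α`
of plays of `σ` on `w`. -/
def CFGame.StatesOf (G : CFGame A) (σ : JStrat A) (q : G.Q) (w : List A) : Set G.Q :=
  {q' | ∃ τ : RStrat A, G.RValid τ ∧ ∃ n : ℕ,
    (G.play σ τ w n).2.1 = [] ∧ G.T.evalFrom q (flat (G.play σ τ w n).1) = q'}

/-- `(p, a, S)` is an effect triple of `σ`. -/
def CFGame.IsEffectTriple (G : CFGame A) (σ : JStrat A) (t : G.Q × A × Set G.Q) : Prop :=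
  G.StatesOf σ t.1 [t.2.1] ⊆ t.2.2

/-- An effect triple is trivial if `δ(p,a) ∈ S`. -/
def CFGame.TrivialTriple (G : CFGame A) (t : G.Q × A × Set G.Q) : Prop :=
  G.T.step t.1 t.2.1 ∈ t.2.2

/-- The substrategy `σ^α`. -/
def subStrat (σ : JStrat A) (α : List (HSym A)) : JStrat A :=
  fun β a => σ (α ++ β) a

/-- The effect set `E(σ)`: all effect triples of all substrategies of `σ`. -/
def CFGame.EffectSet (G : CFGame A) (σ : JStrat A) : Set (G.Q × A × Set G.Q) :=
  {t | ∃ α : List (HSym A), G.IsEffectTriple (subStrat σ α) t}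

/-- The transition relation of the NFA `N_E` associated with a set `E` of effect
triples (state set `P(Q)`, initial state `{s}`, accepting states the subsets of `F`). -/
def CFGame.NEStep (G : CFGame A) (E : Set (G.Q × A × Set G.Q))
    (S : Set G.Q) (a : A) (S' : Set G.Q) : Prop :=
  ∀ p ∈ S, ∃ S'' : Set G.Q, S'' ⊆ S' ∧ (p, a, S'') ∈ E

/-- A strategy for the online word problem `OnlineNFA(N_E)`. -/
def CFGame.NEOnlineStrat (G : CFGame A) (E : Set (G.Q × A × Set G.Q))
    (ρ : List A → Set G.Q) : Prop :=
  ρ [] = {G.T.start} ∧ ∀ (w : List A) (a : A), G.NEStep E (ρ w) a (ρ (w ++ [a]))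

/-- The winning set of a strategy for `OnlineNFA(N_E)`. -/
def CFGame.NEWins (G : CFGame A) (ρ : List A → Set G.Q) : Set (List A) :=
  {w | ρ w ⊆ G.T.accept}

/-- A strategy automaton `M` is `(p,a,St)`-inducing. -/
def CFGame.Inducing (G : CFGame A) {S : Type} (M : DFA (HSym A) S)
    (p : G.Q) (a : A) (St : Set G.Q) : Prop :=
  G.Terminating (autoStrat M) ∧ G.Fn a ∧
  (∀ u : List A, G.R a u → G.StatesOf (autoStrat M) p u ⊆ St) ∧
  ∃ QA : G.Q → Set S,
    (∀ q ∈ St, ∀ q' ∈ St, q ≠ q' → Disjoint (QA q) (QA q')) ∧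
    ∀ u : List A, G.R a u → ∀ τ : RStrat A, G.RValid τ → ∀ n : ℕ,
      (G.play (autoStrat M) τ u n).2.1 = [] →
      ((∀ q ∈ St,
          (M.eval (G.play (autoStrat M) τ u n).1 ∈ QA q ↔
            G.T.evalFrom p (flat (G.play (autoStrat M) τ u n).1) = q)) ∧
        ∀ β : List (HSym A), β <+: (G.play (autoStrat M) τ u n).1 →
          β ≠ (G.play (autoStrat M) τ u n).1 → ∀ r ∈ St, M.eval β ∉ QA r)

section Aux

variable {A : Type}

/-! ### Shortlex basics -/

section ShortLex
variable [Fintype A] [LinearOrder A]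

lemma shortLex_trans {u v w : List A} (h1 : shortLex u v) (h2 : shortLex v w) :
    shortLex u w := by
  rcases h1 with h1 | ⟨h1, h1'⟩ <;> rcases h2 with h2 | ⟨h2, h2'⟩
  · exact Or.inl (h1.trans h2)
  · exact Or.inl (h2 ▸ h1)
  · exact Or.inl (h1 ▸ h2)
  · exact Or.inr ⟨h1.trans h2, List.lex_trans (fun h h' => lt_trans h h') h1' h2'⟩

lemma shortLex_irrefl (w : List A) : ¬ shortLex w w := by
  rintro (h | ⟨-, h⟩)
  · exact lt_irrefl _ h
  · exact irrefl_of (List.Lex (· < ·)) w h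

lemma shortLex_total (v w : List A) : shortLex v w ∨ v = w ∨ shortLex w v := by
  rcases lt_trichotomy v.length w.length with h | h | h
  · exact Or.inl (Or.inl h)
  · rcases trichotomous_of (List.Lex ((· < ·) : A → A → Prop)) v w with h' | h' | h'
    · exact Or.inl (Or.inr ⟨h, h'⟩)
    · exact Or.inr (Or.inl h')
    · exact Or.inr (Or.inr (Or.inr ⟨h.symm, h'⟩))
  · exact Or.inr (Or.inr (Or.inl h))

lemma shortLex_finite (w : List A) : {v : List A | shortLex v w}.Finite := by
  apply (List.finite_length_le A w.length).subset
  rintro v (h | ⟨h, -⟩)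
  · exact le_of_lt h
  · exact le_of_eq h

/-- The rank of a word: the number of shortlex-smaller words. -/
noncomputable def slRank (w : List A) : ℕ := (shortLex_finite w).toFinset.card

lemma slRank_lt {v w : List A} (h : shortLex v w) : slRank v < slRank w := by
  have hsub : insert v (shortLex_finite v).toFinset ⊆ (shortLex_finite w).toFinset := by
    intro x hx
    rcases Finset.mem_insert.mp hx with rfl | hx
    · simpa using h
    · simp only [Set.Finite.mem_toFinset, Set.mem_setOf_eq] at hx ⊢
      exact shortLex_trans hx h
  calc slRank v < (insert v (shortLex_finite v).toFinset).card := by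
        rw [Finset.card_insert_of_notMem (by simp [shortLex_irrefl])]
        exact Nat.lt_succ_self _
    _ ≤ slRank w := Finset.card_le_card hsub

lemma shortLex_wf : WellFounded (shortLex : List A → List A → Prop) :=
  Subrelation.wf (fun h => slRank_lt h) (InvImage.wf slRank Nat.lt_wfRel.wf)

end ShortLex

/-! ### Chains and the level invariant -/

/-- A symbol together with a nesting level is *good* if the level is witnessed by a
derivation chain of function symbols. -/
def GoodSym (G : CFGame A) (s : A × ℕ) : Prop :=
  ∃ f : ℕ → A, f s.2 = s.1 ∧
    ∀ i < s.2, G.Fn (f i) ∧ ∃ v, G.R (f i) v ∧ f (i + 1) ∈ v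

lemma chain_card [Fintype A] {G : CFGame A} (hnr : G.NonRecursive) (f : ℕ → A) (m : ℕ)
    (hfn : ∀ i ≤ m, G.Fn (f i))
    (hder : ∀ i < m, ∃ v, G.R (f i) v ∧ f (i + 1) ∈ v) :
    m + 1 ≤ Fintype.card A := by
  have hinj : Set.InjOn f (Finset.range (m + 1)) := by
    intro i hi j hj hij
    simp only [Finset.coe_range, Set.mem_Iio] at hi hj
    by_contra hne
    rcases Ne.lt_or_gt hne with hlt | hlt
    · refine hnr ⟨j - i, fun t => f (i + t), ?_, ?_, ?_, ?_⟩
      · omega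
      · show f (i + 0) = f (i + (j - i))
        rw [Nat.add_zero, Nat.add_sub_cancel' (le_of_lt hlt)]; exact hij
      · intro t ht; exact hfn (i + t) (by omega)
      · intro t ht
        obtain ⟨v, hv, hv'⟩ := hder (i + t) (by omega)
        refine ⟨v, hv, ?_⟩
        show f (i + (t + 1)) ∈ v
        rwa [← Nat.add_assoc]
    · refine hnr ⟨i - j, fun t => f (j + t), ?_, ?_, ?_, ?_⟩
      · omega
      · show f (j + 0) = f (j + (i - j))
        rw [Nat.add_zero, Nat.add_sub_cancel' (le_of_lt hlt)]; exact hij.symm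
      · intro t ht; exact hfn (j + t) (by omega)
      · intro t ht
        obtain ⟨v, hv, hv'⟩ := hder (j + t) (by omega)
        refine ⟨v, hv, ?_⟩
        show f (j + (t + 1)) ∈ v
        rwa [← Nat.add_assoc]
  calc m + 1 = (Finset.range (m + 1)).card := (Finset.card_range _).symm
    _ ≤ (Finset.univ : Finset A).card := by
        apply Finset.card_le_card_of_injOn f (fun x _ => Finset.mem_univ _)
        intro i hi j hj h
        exact hinj (by simpa using hi) (by simpa using hj) h
    _ = Fintype.card A := rfl

lemma GoodSym.level_le [Fintype A] {G : CFGame A} (hnr : G.NonRecursive)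
    {a : A} {k : ℕ} (h : GoodSym G (a, k)) : k ≤ Fintype.card A := by
  obtain ⟨f, hf, hch⟩ := h
  cases k with
  | zero =>
      have : Nonempty A := ⟨a⟩
      exact Nat.le_of_lt_succ (Nat.lt_succ_of_lt (Fintype.card_pos))
  | succ m =>
      exact chain_card hnr f m (fun i hi => (hch i (by omega)).1)
        (fun i hi => (hch i (by omega)).2)

lemma GoodSym.call_level_le [Fintype A] {G : CFGame A} (hnr : G.NonRecursive)
    {a : A} {k : ℕ} (h : GoodSym G (a, k)) (hfn : G.Fn a) :
    k + 1 ≤ Fintype.card A := by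
  obtain ⟨f, hf, hch⟩ := h
  exact chain_card hnr f k
    (fun i hi => by
      rcases eq_or_lt_of_le hi with rfl | hi
      · simpa [hf] using hfn
      · exact (hch i hi).1)
    (fun i hi => (hch i hi).2)

lemma GoodSym.extend {G : CFGame A} {a b : A} {k : ℕ} {u : List A}
    (h : GoodSym G (a, k)) (hu : G.R a u) (hb : b ∈ u) :
    GoodSym G (b, k + 1) := by
  obtain ⟨f, hf, hch⟩ := h
  refine ⟨fun i => if i = k + 1 then b else f i, by simp, ?_⟩
  intro i hi
  have hik : i ≤ k := by omega
  have h1 : (if i = k + 1 then b else f i) = f i := by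
    simp [Nat.ne_of_lt (Nat.lt_succ_of_le hik)]
  show G.Fn (if i = k + 1 then b else f i) ∧
    ∃ v, G.R (if i = k + 1 then b else f i) v ∧ (if i + 1 = k + 1 then b else f (i + 1)) ∈ v
  rcases eq_or_lt_of_le hik with rfl | hlt
  · rw [h1, hf]
    exact ⟨⟨u, hu⟩, u, hu, by simpa using hb⟩
  · have h2 : (if i + 1 = k + 1 then b else f (i + 1)) = f (i + 1) := by
      simp [Nat.ne_of_lt hlt]
    rw [h1, h2]
    exact hch i hlt

/-- The main play invariant: all remaining symbols are good, and the recorded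
depth is bounded by the size of the alphabet. -/
lemma play_invariant [Fintype A] {G : CFGame A} (hnr : G.NonRecursive)
    (σ : JStrat A) {τ : RStrat A} (hτ : G.RValid τ) (w : List A) (n : ℕ) :
    (∀ s ∈ (G.play σ τ w n).2.1, GoodSym G s) ∧
      (G.play σ τ w n).2.2 ≤ Fintype.card A := by
  induction n with
  | zero =>
      constructor
      · intro s hs
        simp only [CFGame.play, Function.iterate_zero, id_eq, List.mem_map] at hs
        obtain ⟨a, -, rfl⟩ := hs
        exact ⟨fun _ => a, rfl, by omega⟩
      · simp [CFGame.play]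
  | succ n ih =>
      obtain ⟨ihg, ihd⟩ := ih
      rw [CFGame.play, Function.iterate_succ_apply'] at *
      set c := (G.step σ τ)^[n] ([], w.map (fun a => (a, 0)), 0) with hc
      obtain ⟨α, rem, d⟩ := c
      rcases rem with _ | ⟨⟨a, k⟩, v⟩
      · exact ⟨by rintro s ⟨⟩, ihd⟩
      · show (∀ s ∈ (CFGame.step G σ τ (α, (a, k) :: v, d)).2.1, GoodSym G s) ∧ _
        rw [CFGame.step]
        by_cases hcall : G.Fn a ∧ σ α a = JMove.call
        · rw [if_pos hcall]
          constructor
          · intro s hs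
            simp only [List.mem_append, List.mem_map] at hs
            rcases hs with ⟨b, hb, rfl⟩ | hs
            · exact GoodSym.extend (ihg (a, k) (by simp)) (hτ α a hcall.1) hb
            · exact ihg s (by simp [hs])
          · exact max_le ihd ((ihg (a, k) (by simp)).call_level_le hnr hcall.1)
        · rw [if_neg hcall]
          exact ⟨fun s hs => ihg s (List.mem_cons_of_mem _ hs), ihd⟩

end Aux
section Aux2
variable {A : Type}

/-! ### Termination of plays -/

/-- Number of remaining symbols at a given level. -/
def lvlCount (rem : List (A × ℕ)) (j : ℕ) : ℕ :=
  (rem.filter (fun s => s.2 = j)).length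

lemma lvlCount_append (u v : List (A × ℕ)) (j : ℕ) :
    lvlCount (u ++ v) j = lvlCount u j + lvlCount v j := by
  simp [lvlCount, List.filter_append]

lemma lvlCount_cons (a : A) (k : ℕ) (v : List (A × ℕ)) (j : ℕ) :
    lvlCount ((a, k) :: v) j = (if k = j then 1 else 0) + lvlCount v j := by
  by_cases h : k = j <;> simp [lvlCount, List.filter_cons, h] <;> omega

lemma lvlCount_map_ne (u : List A) (k j : ℕ) (h : k ≠ j) :
    lvlCount (u.map (fun b => (b, k))) j = 0 := by
  induction u with
  | nil => rfl
  | cons b u ih => simpa [lvlCount, List.filter_cons, h] using ih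

lemma step_lex {G : CFGame A} (σ : JStrat A) (τ : RStrat A) {C : ℕ}
    (α : List (HSym A)) (a : A) (k : ℕ) (v : List (A × ℕ)) (d : ℕ) (hk : k < C + 2) :
    Pi.Lex (· < ·) (fun {_} => (· < ·))
      (fun i : Fin (C + 2) => lvlCount (G.step σ τ (α, (a, k) :: v, d)).2.1 (i : ℕ))
      (fun i : Fin (C + 2) => lvlCount ((a, k) :: v) (i : ℕ)) := by
  classical
  refine ⟨⟨k, hk⟩, ?_, ?_⟩
  · intro j hj
    have hjk : (j : ℕ) < k := hj
    show _ = lvlCount ((a, k) :: v) (j : ℕ)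
    rw [CFGame.step]
    by_cases hcall : G.Fn a ∧ σ α a = JMove.call
    · rw [if_pos hcall]
      show lvlCount ((τ α a).map (fun b => (b, k + 1)) ++ v) (j : ℕ) = _
      rw [lvlCount_append, lvlCount_map_ne _ _ _ (by omega), lvlCount_cons,
        if_neg (by omega)]
    · rw [if_neg hcall]
      show lvlCount v (j : ℕ) = _
      rw [lvlCount_cons, if_neg (by omega)]
      omega
  · show _ < lvlCount ((a, k) :: v) k
    rw [CFGame.step, lvlCount_cons, if_pos rfl]
    by_cases hcall : G.Fn a ∧ σ α a = JMove.call
    · rw [if_pos hcall]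
      show lvlCount ((τ α a).map (fun b => (b, k + 1)) ++ v) k < _
      rw [lvlCount_append, lvlCount_map_ne _ _ _ (by omega)]
      omega
    · rw [if_neg hcall]
      show lvlCount v k < _
      omega

/-- Every play of a non-recursive game terminates. -/
lemma play_terminates [Fintype A] {G : CFGame A} (hnr : G.NonRecursive)
    (σ : JStrat A) {τ : RStrat A} (hτ : G.RValid τ) (w : List A) :
    ∃ n : ℕ, (G.play σ τ w n).2.1 = [] := by
  classical
  set C := Fintype.card A with hC
  by_contra hcon
  push_neg at hcon
  set meas : ℕ → (Fin (C + 2) → ℕ) :=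
    fun n => fun i => lvlCount (G.play σ τ w n).2.1 (i : ℕ) with hmeas
  have hdec : ∀ n, Pi.Lex (· < ·) (fun {_} => (· < ·)) (meas (n + 1)) (meas n) := by
    intro n
    obtain ⟨hgood, -⟩ := play_invariant hnr σ hτ w n
    have hstep : G.play σ τ w (n + 1) = G.step σ τ (G.play σ τ w n) := by
      rw [CFGame.play, CFGame.play, Function.iterate_succ_apply']
    rcases hr : (G.play σ τ w n).2.1 with _ | ⟨⟨a, k⟩, v⟩
    · exact absurd hr (hcon n)
    have hkC : k ≤ C := (hgood (a, k) (by rw [hr]; exact List.mem_cons_self)).level_le hnr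
    have hsplit : G.play σ τ w n =
        ((G.play σ τ w n).1, (a, k) :: v, (G.play σ τ w n).2.2) := by
      rw [← hr]
    have hlex := step_lex (G := G) σ τ (C := C) (G.play σ τ w n).1 a k v
      (G.play σ τ w n).2.2 (by omega)
    simp only [hmeas]
    rw [hstep, hsplit]
    exact hlex
  have hwf : WellFounded (Pi.Lex ((· < ·) : Fin (C + 2) → Fin (C + 2) → Prop)
      (fun {_} => ((· < ·) : ℕ → ℕ → Prop))) :=
    Pi.Lex.wellFounded (r := ((· < ·) : Fin (C + 2) → Fin (C + 2) → Prop))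
      (fun _ => Nat.lt_wfRel.wf)
  have hfalse : ∀ x, ∀ n, meas n = x → False := by
    intro x
    induction x using hwf.induction with
    | _ x ih =>
      intro n hn
      exact ih (meas (n + 1)) (hn ▸ hdec n) (n + 1) rfl
  exact hfalse (meas 0) 0 rfl

/-- After the remaining string is exhausted, the play is constant. -/
lemma play_stable {G : CFGame A} (σ : JStrat A) (τ : RStrat A) (w : List A) {n : ℕ}
    (h : (G.play σ τ w n).2.1 = []) (j : ℕ) :
    G.play σ τ w (n + j) = G.play σ τ w n := by
  induction j with
  | zero => rfl
  | succ j ih =>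
      have hstep : G.play σ τ w (n + j + 1) = G.step σ τ (G.play σ τ w (n + j)) := by
        rw [CFGame.play, CFGame.play, Function.iterate_succ_apply']
      rw [show n + (j + 1) = n + j + 1 by omega, hstep, ih]
      have hsplit : G.play σ τ w n = ((G.play σ τ w n).1, [], (G.play σ τ w n).2.2) := by
        rw [← h]
      rw [hsplit, CFGame.step]

/-- Plays of two strategies agreeing along the histories of the first coincide. -/
lemma play_congr {G : CFGame A} (σ1 σ2 : JStrat A) (τ : RStrat A) (w : List A) (n : ℕ)
    (H : ∀ i < n, ∀ a k v, (G.play σ1 τ w i).2.1 = (a, k) :: v →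
      σ2 (G.play σ1 τ w i).1 a = σ1 (G.play σ1 τ w i).1 a) :
    G.play σ2 τ w n = G.play σ1 τ w n := by
  induction n with
  | zero => rfl
  | succ n ih =>
      have ihn := ih (fun i hi => H i (by omega))
      have hstep1 : G.play σ1 τ w (n + 1) = G.step σ1 τ (G.play σ1 τ w n) := by
        rw [CFGame.play, CFGame.play, Function.iterate_succ_apply']
      have hstep2 : G.play σ2 τ w (n + 1) = G.step σ2 τ (G.play σ2 τ w n) := by
        rw [CFGame.play, CFGame.play, Function.iterate_succ_apply']
      rw [hstep1, hstep2, ihn]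
      rcases hr : (G.play σ1 τ w n).2.1 with _ | ⟨⟨a, k⟩, v⟩
      · have hsplit : G.play σ1 τ w n =
            ((G.play σ1 τ w n).1, [], (G.play σ1 τ w n).2.2) := by rw [← hr]
        rw [hsplit, CFGame.step, CFGame.step]
      · have hsplit : G.play σ1 τ w n =
            ((G.play σ1 τ w n).1, (a, k) :: v, (G.play σ1 τ w n).2.2) := by rw [← hr]
        have hσ := H n (by omega) a k v hr
        rw [hsplit, CFGame.step, CFGame.step, hσ]

end Aux2
section Main
variable {A : Type} [Fintype A] [LinearOrder A]

/-- The greedily-optimal winning set, defined by well-founded recursion on shortlex. -/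
noncomputable def Dmem (G : CFGame A) : List A → Prop :=
  shortLex_wf.fix (fun w ih =>
    ∃ σ : JStrat A, G.WinsOn σ w ∧ ∀ v, ∀ h : shortLex v w, ih v h → G.WinsOn σ v)

lemma Dmem_iff (G : CFGame A) (w : List A) :
    Dmem G w ↔ ∃ σ : JStrat A, G.WinsOn σ w ∧
      ∀ v, shortLex v w → Dmem G v → G.WinsOn σ v := by
  unfold Dmem
  rw [WellFounded.fix_eq]

/-- A single strategy winning on all designated words of length at most `k`. -/
lemma exists_wins_upTo (G : CFGame A) (k : ℕ) :
    ∃ σk : JStrat A, ∀ v : List A, Dmem G v → v.length ≤ k → G.WinsOn σk v := by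
  classical
  set S : Set (List A) := {v | Dmem G v ∧ v.length ≤ k} with hS
  have hfin : S.Finite := (List.finite_length_le A k).subset (fun v hv => hv.2)
  rcases S.eq_empty_or_nonempty with he | hne
  · refine ⟨fun _ _ => JMove.read, fun v hv hlen => ?_⟩
    exact absurd (show v ∈ S from ⟨hv, hlen⟩) (by simp [he])
  obtain ⟨w0, hw0S, hmax⟩ := Set.exists_max_image S slRank hfin hne
  obtain ⟨σ, hσw, hσv⟩ := (Dmem_iff G w0).mp hw0S.1
  refine ⟨σ, fun v hv hlen => ?_⟩
  rcases shortLex_total v w0 with h | rfl | h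
  · exact hσv v h hv
  · exact hσw
  · exact absurd (hmax v ⟨hv, hlen⟩) (not_le.mpr (slRank_lt h))

/-- A sequence of strategies winning on longer and longer parts of `D`. -/
noncomputable def sigmaSeq (G : CFGame A) : ℕ → JStrat A :=
  fun k => (exists_wins_upTo G k).choose

lemma sigmaSeq_spec (G : CFGame A) (k : ℕ) :
    ∀ v : List A, Dmem G v → v.length ≤ k → G.WinsOn (sigmaSeq G k) v :=
  (exists_wins_upTo G k).choose_spec

/-- The ultrafilter limit of `sigmaSeq`. -/
noncomputable def sigmaStar (G : CFGame A) : JStrat A :=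
  fun α a =>
    letI := Classical.propDecidable
      ({k | sigmaSeq G k α a = JMove.call} ∈ Filter.hyperfilter ℕ)
    if {k | sigmaSeq G k α a = JMove.call} ∈ Filter.hyperfilter ℕ then JMove.call
    else JMove.read

lemma sigmaStar_agree (G : CFGame A) (α : List (HSym A)) (a : A) :
    {k | sigmaSeq G k α a = sigmaStar G α a} ∈ Filter.hyperfilter ℕ := by
  rw [sigmaStar]
  split_ifs with h
  · exact h
  · have he : {k | sigmaSeq G k α a = JMove.read}
        = {k | sigmaSeq G k α a = JMove.call}ᶜ := by
      ext k
      cases hk : sigmaSeq G k α a <;> simp [hk]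
    rw [he]
    exact (Ultrafilter.compl_mem_iff_notMem).mpr h

lemma sigmaStar_wins (G : CFGame A) (hnr : G.NonRecursive) (w : List A)
    (hw : Dmem G w) : G.WinsOn (sigmaStar G) w := by
  classical
  intro τ hτ
  obtain ⟨m, hm⟩ := play_terminates hnr (sigmaStar G) hτ w
  have hT : ∀ i : ℕ, {k | ∀ a l v, (G.play (sigmaStar G) τ w i).2.1 = (a, l) :: v →
      sigmaSeq G k (G.play (sigmaStar G) τ w i).1 a
        = sigmaStar G (G.play (sigmaStar G) τ w i).1 a} ∈ Filter.hyperfilter ℕ := by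
    intro i
    rcases hr : (G.play (sigmaStar G) τ w i).2.1 with _ | ⟨⟨a, l⟩, v⟩
    · refine Filter.mem_of_superset Filter.univ_mem ?_
      intro k _ a l v hv
      cases hv
    · refine Filter.mem_of_superset
        (sigmaStar_agree G (G.play (sigmaStar G) τ w i).1 a) ?_
      intro k hk a' l' v' hv'
      obtain ⟨⟨ha, -⟩, -⟩ : (a = a' ∧ l = l') ∧ v = v' := by simpa using hv'
      exact ha ▸ hk
  have hTall : {k | ∀ i < m, ∀ a l v, (G.play (sigmaStar G) τ w i).2.1 = (a, l) :: v →
      sigmaSeq G k (G.play (sigmaStar G) τ w i).1 a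
        = sigmaStar G (G.play (sigmaStar G) τ w i).1 a} ∈ Filter.hyperfilter ℕ := by
    have hbi := (Filter.biInter_mem (Set.finite_Iio m)).mpr
      (fun i (_ : i ∈ Set.Iio m) => hT i)
    refine Filter.mem_of_superset hbi ?_
    intro k hk
    simp only [Set.mem_iInter] at hk
    intro i him
    exact hk i him
  have hC : {k : ℕ | w.length ≤ k} ∈ Filter.hyperfilter ℕ :=
    Nat.hyperfilter_le_atTop (Filter.mem_atTop w.length)
  obtain ⟨k, hk1, hk2⟩ := Filter.nonempty_of_mem (Filter.inter_mem hTall hC)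
  obtain ⟨n', hn'e, hn'a⟩ := sigmaSeq_spec G k w hw hk2 τ hτ
  rcases le_total n' m with h | h
  · have hpl := play_congr (sigmaStar G) (sigmaSeq G k) τ w n'
      (fun i hi => hk1 i (lt_of_lt_of_le hi h))
    refine ⟨n', ?_, ?_⟩
    · rw [← hpl]; exact hn'e
    · rw [← hpl]; exact hn'a
  · have hpl := play_congr (sigmaStar G) (sigmaSeq G k) τ w m (fun i hi => hk1 i hi)
    have h1 : (G.play (sigmaSeq G k) τ w m).2.1 = [] := by rw [hpl]; exact hm
    have h2 : G.play (sigmaSeq G k) τ w n' = G.play (sigmaSeq G k) τ w m := by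
      have hst := play_stable (sigmaSeq G k) τ w h1 (n' - m)
      rwa [Nat.add_sub_cancel' h] at hst
    refine ⟨m, hm, ?_⟩
    rw [← hpl, ← h2]
    exact hn'a

lemma W_sigmaStar (G : CFGame A) (hnr : G.NonRecursive) :
    G.W (sigmaStar G) = {w | Dmem G w} := by
  ext w
  constructor
  · intro hw
    rw [Set.mem_setOf_eq, Dmem_iff]
    exact ⟨sigmaStar G, hw, fun v _ hv => sigmaStar_wins G hnr v hv⟩
  · exact fun hw => sigmaStar_wins G hnr w hw

lemma sigmaStar_weaklyDominant (G : CFGame A) (hnr : G.NonRecursive) :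
    G.WeaklyDominant (sigmaStar G) := by
  intro σ'
  by_cases he : G.W σ' = G.W (sigmaStar G)
  · exact Or.inl he
  right
  rw [W_sigmaStar G hnr]
  rw [W_sigmaStar G hnr] at he
  set S : Set (List A) := {v | ¬ (v ∈ G.W σ' ↔ Dmem G v)} with hSdef
  have hne : S.Nonempty := by
    rcases S.eq_empty_or_nonempty with h | h
    · exfalso
      apply he
      ext v
      by_contra hc
      exact absurd (show v ∈ S from hc) (by simp [h])
    · exact h
  set w0 := shortLex_wf.min S hne with hw0def
  have hw0 : w0 ∈ S := shortLex_wf.min_mem S hne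
  have hmin : ∀ v, shortLex v w0 → (v ∈ G.W σ' ↔ Dmem G v) := by
    intro v hv
    by_contra hc
    exact shortLex_wf.not_lt_min S hc hv
  by_cases hd : Dmem G w0
  · have hnw : w0 ∉ G.W σ' := fun hmem => hw0 (iff_of_true hmem hd)
    exact ⟨w0, hd, hnw, fun v hv => hmin v hv⟩
  · exfalso
    apply hw0
    have hwσ' : w0 ∉ G.W σ' := by
      intro hmem
      apply hd
      rw [Dmem_iff]
      exact ⟨σ', hmem, fun v hv hdv => (hmin v hv).mpr hdv⟩
    exact iff_of_false hwσ' hd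

lemma sigmaStar_undominated (G : CFGame A) (hnr : G.NonRecursive) :
    G.Undominated (sigmaStar G) := by
  rintro ⟨σ', hσ'⟩
  rcases sigmaStar_weaklyDominant G hnr σ' with he | ⟨w, hwin, hnot, -⟩
  · exact hσ'.ne he.symm
  · exact hnot (hσ'.subset hwin)

end Main
theorem statement19 {A : Type} [Fintype A] [LinearOrder A] (G : CFGame A)
    (hnr : G.NonRecursive) :
    G.BoundedDepthProperty ∧ (∃ σ : JStrat A, G.WeaklyDominant σ) ∧
      (∃ σ : JStrat A, G.Undominated σ) := by
  refine ⟨⟨fun _ => Fintype.card A, fun σ k => ⟨σ, fun w hw _ => ⟨hw, ?_⟩⟩⟩,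
    ⟨sigmaStar G, sigmaStar_weaklyDominant G hnr⟩,
    ⟨sigmaStar G, sigmaStar_undominated G hnr⟩⟩
  intro τ hτ n
  exact (play_invariant hnr σ hτ w n).2

end CFG
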